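/- Let l, m be positive integers with l ≥ 10m, and let T ⊆ [l + 5m] be a fixed subset of size l. Then 2 · |{T' ⊆ [l + 5m] : |T'| = l and |T' ∩ T| ≥ l − m}| ≤ C(l + 5m, l); that is, a uniformly random size-l subset T' of [l + 5m] contains at least l − m elements of T with probability at most 1/2. -/

import Mathlib

private lemma choose_mono_half {n j k : ℕ} (hjk : j ≤ k) (hk : 2 * k ≤ n) :
    n.choose j ≤ n.choose k := by
  induction k, hjk using Nat.le_induction with
  | base => exact le_refl _
  | succ k hjk ih =>
    refine (ih (by omega)).trans (Nat.choose_le_succ_of_lt_half_left ?_)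
    omega

private lemma choose_mono_right {n j k : ℕ} (hjk : j ≤ k) (hkn : k ≤ n - j) :
    n.choose j ≤ n.choose k := by
  have hjn : j ≤ n := le_trans hjk (le_trans hkn (Nat.sub_le _ _))
  have hkn' : k ≤ n := le_trans hkn (Nat.sub_le _ _)
  rcases le_or_gt (2 * k) n with h | h
  · exact choose_mono_half hjk h
  · rw [← Nat.choose_symm hkn']
    exact choose_mono_half (by omega) (by omega)

theorem random_subset_overlap (l m : ℕ) (hm : 1 ≤ m) (hl : 10 * m ≤ l)
    (T : Finset (Fin (l + 5 * m))) (hT : T.card = l) :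
    2 * ((Finset.univ : Finset (Fin (l + 5 * m))).powerset.filter
          (fun T' => T'.card = l ∧ l - m ≤ (T' ∩ T).card)).card
      ≤ Nat.choose (l + 5 * m) l := by
  classical
  set Bad := (Finset.univ : Finset (Fin (l + 5 * m))).powerset.filter
          (fun T' => T'.card = l ∧ l - m ≤ (T' ∩ T).card) with hBad
  have hcompl : Tᶜ.card = 5 * m := by
    rw [Finset.card_compl, hT]
    simp
  -- Step A: card of each fiber
  have hfiber : ∀ j ∈ Finset.range (m + 1),
      (Bad.filter (fun T' => (T' \ T).card = j)).card
        = l.choose j * (5 * m).choose j := by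
    intro j hj
    rw [Finset.mem_range] at hj
    have hcard : (Bad.filter (fun T' => (T' \ T).card = j)).card
        = ((T.powersetCard (l - j)) ×ˢ (Tᶜ.powersetCard j)).card := by
      apply Finset.card_nbij' (fun T' => (T' ∩ T, T' \ T)) (fun p => p.1 ∪ p.2)
      · intro T' hT'
        simp only [Finset.mem_coe, hBad, Finset.mem_filter, Finset.mem_powerset] at hT'
        obtain ⟨⟨-, hc, -⟩, hs⟩ := hT'
        have hsum := Finset.card_inter_add_card_sdiff T' T
        simp only [Finset.mem_coe, Finset.mem_product, Finset.mem_powersetCard]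
        refine ⟨⟨Finset.inter_subset_right, by omega⟩, ⟨?_, hs⟩⟩
        intro a ha
        simp only [Finset.mem_sdiff] at ha
        simp [ha.2]
      · rintro ⟨A, B⟩ hp
        simp only [Finset.mem_coe, Finset.mem_product, Finset.mem_powersetCard] at hp
        obtain ⟨⟨hAT, hA⟩, hBT, hB⟩ := hp
        have hBTd : Disjoint B T := by
          refine Finset.disjoint_left.mpr fun a haB haT => ?_
          have := hBT haB
          simp only [Finset.mem_compl] at this
          exact this haT
        have hdisj : Disjoint A B := Finset.disjoint_left.mpr
          fun a haA haB => (Finset.disjoint_right.mp hBTd) (hAT haA) haB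
        have hcardU : (A ∪ B).card = l := by
          rw [Finset.card_union_of_disjoint hdisj, hA, hB]
          omega
        have hinter : (A ∪ B) ∩ T = A := by
          rw [Finset.union_inter_distrib_right,
            Finset.inter_eq_left.mpr hAT,
            Finset.disjoint_iff_inter_eq_empty.mp hBTd, Finset.union_empty]
        have hsdiff : (A ∪ B) \ T = B := by
          rw [Finset.union_sdiff_distrib, Finset.sdiff_eq_empty_iff_subset.mpr hAT,
            Finset.empty_union, Finset.sdiff_eq_self_of_disjoint hBTd]
        simp only [Finset.mem_coe, hBad, Finset.mem_filter, Finset.mem_powerset]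
        refine ⟨⟨Finset.subset_univ _, hcardU, ?_⟩, by rw [hsdiff, hB]⟩
        rw [hinter, hA]
        omega
      · intro T' _
        ext a
        simp only [Finset.mem_union, Finset.mem_inter, Finset.mem_sdiff]
        tauto
      · rintro ⟨A, B⟩ hp
        simp only [Finset.mem_coe, Finset.mem_product, Finset.mem_powersetCard] at hp
        obtain ⟨⟨hAT, hA⟩, hBT, hB⟩ := hp
        have hBTd : Disjoint B T := by
          refine Finset.disjoint_left.mpr fun a haB haT => ?_
          have := hBT haB
          simp only [Finset.mem_compl] at this
          exact this haT
        have hinter : (A ∪ B) ∩ T = A := by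
          rw [Finset.union_inter_distrib_right,
            Finset.inter_eq_left.mpr hAT,
            Finset.disjoint_iff_inter_eq_empty.mp hBTd, Finset.union_empty]
        have hsdiff : (A ∪ B) \ T = B := by
          rw [Finset.union_sdiff_distrib, Finset.sdiff_eq_empty_iff_subset.mpr hAT,
            Finset.empty_union, Finset.sdiff_eq_self_of_disjoint hBTd]
        simp [hinter, hsdiff]
    rw [hcard, Finset.card_product, Finset.card_powersetCard, Finset.card_powersetCard,
      hT, hcompl, Nat.choose_symm (by omega : j ≤ l)]
  -- Step A': Bad.card as a sum
  have hBadCard : Bad.card = ∑ j ∈ Finset.range (m + 1), l.choose j * (5 * m).choose j := by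
    rw [Finset.card_eq_sum_card_fiberwise
      (f := fun T' => (T' \ T).card) (t := Finset.range (m + 1)) ?_]
    · exact Finset.sum_congr rfl hfiber
    · intro T' hT'
      simp only [Finset.mem_coe, hBad, Finset.mem_filter, Finset.mem_powerset] at hT'
      obtain ⟨-, hc, hi⟩ := hT'
      have hsum := Finset.card_inter_add_card_sdiff T' T
      have hTle : (T' ∩ T).card ≤ T.card := Finset.card_le_card Finset.inter_subset_right
      show (T' \ T).card ∈ Finset.range (m + 1)
      rw [Finset.mem_range]
      omega
  -- Step B: Vandermonde
  have hVdm : Nat.choose (l + 5 * m) l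
      = ∑ j ∈ Finset.range (5 * m + 1), l.choose j * (5 * m).choose j := by
    have h1 : Nat.choose (l + 5 * m) l = Nat.choose (l + 5 * m) (5 * m) := by
      rw [← Nat.choose_symm (by omega : l ≤ l + 5 * m)]
      congr 1
      omega
    rw [h1, Nat.add_choose_eq, Finset.Nat.sum_antidiagonal_eq_sum_range_succ_mk]
    refine Finset.sum_congr rfl fun k hk => ?_
    rw [Finset.mem_range] at hk
    rw [Nat.choose_symm (by omega : k ≤ 5 * m)]
  -- Step C: the comparison
  rw [hBadCard, hVdm, two_mul]
  have hsplit : ∑ j ∈ Finset.range (5 * m + 1), l.choose j * (5 * m).choose j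
      = (∑ j ∈ Finset.range (m + 1), l.choose j * (5 * m).choose j)
        + ∑ j ∈ Finset.Ico (m + 1) (5 * m + 1), l.choose j * (5 * m).choose j := by
    rw [Finset.range_eq_Ico, Finset.range_eq_Ico]
    exact (Finset.sum_Ico_consecutive _ (Nat.zero_le (m + 1))
      (by omega : m + 1 ≤ 5 * m + 1)).symm
  rw [hsplit]
  have hkey : ∑ j ∈ Finset.range (m + 1), l.choose j * (5 * m).choose j
      ≤ ∑ j ∈ Finset.Ico (m + 1) (5 * m + 1), l.choose j * (5 * m).choose j := by
    calc ∑ j ∈ Finset.range (m + 1), l.choose j * (5 * m).choose j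
        ≤ ∑ j ∈ Finset.range (m + 1),
            l.choose (m + 1 + j) * (5 * m).choose (m + 1 + j) := by
          refine Finset.sum_le_sum fun j hj => ?_
          rw [Finset.mem_range] at hj
          exact Nat.mul_le_mul
            (choose_mono_right (by omega) (by omega))
            (choose_mono_right (by omega) (by omega))
      _ = ∑ j ∈ Finset.Ico (m + 1) (2 * m + 2), l.choose j * (5 * m).choose j := by
          rw [Finset.sum_Ico_eq_sum_range,
            (by omega : 2 * m + 2 - (m + 1) = m + 1)]
      _ ≤ ∑ j ∈ Finset.Ico (m + 1) (5 * m + 1), l.choose j * (5 * m).choose j := by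
          exact Finset.sum_le_sum_of_subset (Finset.Ico_subset_Ico le_rfl (by omega))
  exact Nat.add_le_add_left hkey _
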